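/- (Consistency of the kernel estimator) Let n ≥ 1, let p be a probability distribution on the finite set S_n of permutations of {1,…,n}, and let R ⊆ S_n. Let F assign to each permutation π a nonempty set F(π) ⊆ S_n with π ∈ F(π), such that for every π either F(π) ⊆ R or F(π) ∩ R = ∅ (each censoring set is either contained in R or disjoint from R). Let q(·|S) be, for each nonempty S ⊆ S_n, nonnegative weights supported on S and summing to 1. Let X_1, X_2, … be an i.i.d. sequence of random permutations with common law p, and fix 0 < h ≤ 1. Then the kernel estimator p̂_m(R) = (1/m) Σ_{i=1}^{m} Σ_{π∈R} Σ_{σ∈F(X_i)} q(σ|F(X_i)) K_h(T(π,σ)) converges almost surely to p(R) as m → ∞. -/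

import Mathlib

open MeasureTheory ProbabilityTheory Filter

/-- Kendall's tau distance between two permutations of `Fin n`. -/
def kendall {n : ℕ} (π σ : Equiv.Perm (Fin n)) : ℕ :=
  (Finset.univ.filter (fun p : Fin n × Fin n =>
    p.1 < p.2 ∧ ((π p.1 < π p.2) ↔ ¬ (σ p.1 < σ p.2)))).card

/-- Normalization constant of the triangular kernel with bandwidth `h` for a fixed
center (the identity permutation):
`C(h) = Σ_{σ∈S_n} (1 − T(σ,π₀)/h)·I(T(σ,π₀) < h)`. -/
noncomputable def triC (n : ℕ) (h : ℝ) : ℝ :=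
  ∑ σ : Equiv.Perm (Fin n),
    (1 - (kendall σ 1 : ℝ) / h) * (if (kendall σ 1 : ℝ) < h then 1 else 0)

/-- The normalized triangular kernel on permutations:
`K_h(T(π,σ)) = (1 − T(π,σ)/h)·I(T(π,σ) < h)/C(h)`. -/
noncomputable def triK (n : ℕ) (h : ℝ) (π σ : Equiv.Perm (Fin n)) : ℝ :=
  ((1 - (kendall π σ : ℝ) / h) * (if (kendall π σ : ℝ) < h then 1 else 0)) / triC n h

lemma kendall_eq_zero_iff {n : ℕ} (π σ : Equiv.Perm (Fin n)) :
    kendall π σ = 0 ↔ π = σ := by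
  constructor
  · intro h0
    rw [kendall, Finset.card_eq_zero, Finset.filter_eq_empty_iff] at h0
    have key : ∀ i j : Fin n, i < j → (π i < π j ↔ σ i < σ j) := by
      intro i j hij
      have h1 := h0 (Finset.mem_univ ((i, j) : Fin n × Fin n))
      simp only [not_and] at h1
      have h2 := h1 hij
      tauto
    have hsm : StrictMono (fun a => σ (π.symm a)) := by
      intro a b hab
      rcases lt_trichotomy (π.symm a) (π.symm b) with hij | hij | hij
      · exact (key _ _ hij).1 (by simpa using hab)
      · exact absurd (π.symm.injective.eq_iff.1 hij ▸ rfl : a = b) hab.ne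
      · have hiff := key _ _ hij
        simp only [Equiv.apply_symm_apply] at hiff
        have hfalse : ¬ (σ (π.symm b) < σ (π.symm a)) := fun hc =>
          absurd (hiff.2 hc) hab.not_gt
        have hne : σ (π.symm a) ≠ σ (π.symm b) :=
          fun hc => hij.ne' (σ.injective hc)
        exact lt_of_le_of_ne (not_lt.1 hfalse) hne
    have hrange : Set.range (fun a => σ (π.symm a)) = Set.range (id : Fin n → Fin n) := by
      rw [Set.range_id]
      exact Set.range_eq_univ.2 (σ.surjective.comp π.symm.surjective)
    have hfun : (fun a => σ (π.symm a)) = id := by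
      haveI : WellFoundedLT (Fin n) := inferInstance
      exact (StrictMono.range_inj (β := Fin n) (γ := Fin n) hsm strictMono_id).1 hrange
    refine Equiv.ext fun x => ?_
    have := congrFun hfun (π x)
    simpa using this.symm
  · intro hπσ
    subst hπσ
    rw [kendall, Finset.card_eq_zero, Finset.filter_eq_empty_iff]
    intro p _
    simp only [not_and]
    intro _
    tauto

lemma nat_cast_lt_of_le_one {h : ℝ} (hh1 : h ≤ 1) (k : ℕ) :
    ((k : ℝ) < h) → k = 0 := by
  intro hk
  have : (k : ℝ) < 1 := lt_of_lt_of_le hk hh1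
  exact_mod_cast Nat.lt_one_iff.1 (by exact_mod_cast this)

lemma triC_eq_one {n : ℕ} {h : ℝ} (hh0 : 0 < h) (hh1 : h ≤ 1) : triC n h = 1 := by
  rw [triC]
  have hterm : ∀ σ : Equiv.Perm (Fin n),
      (1 - (kendall σ 1 : ℝ) / h) * (if (kendall σ 1 : ℝ) < h then 1 else 0)
      = if σ = 1 then 1 else 0 := by
    intro σ
    by_cases hσ : σ = 1
    · have hk : kendall σ 1 = 0 := (kendall_eq_zero_iff σ 1).2 hσ
      rw [hk, if_pos hσ]
      simp [hh0]
    · have hk : kendall σ 1 ≠ 0 := fun hc => hσ ((kendall_eq_zero_iff σ 1).1 hc)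
      have hnot : ¬ ((kendall σ 1 : ℝ) < h) := fun hc => hk (nat_cast_lt_of_le_one hh1 _ hc)
      rw [if_neg hnot, if_neg hσ, mul_zero]
  rw [Finset.sum_congr rfl fun σ _ => hterm σ]
  simp

lemma triK_indicator {n : ℕ} {h : ℝ} (hh0 : 0 < h) (hh1 : h ≤ 1)
    (π σ : Equiv.Perm (Fin n)) : triK n h π σ = if π = σ then 1 else 0 := by
  rw [triK, triC_eq_one hh0 hh1, div_one]
  by_cases hπσ : π = σ
  · have hk : kendall π σ = 0 := (kendall_eq_zero_iff π σ).2 hπσ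
    rw [hk, if_pos hπσ]
    simp [hh0]
  · have hk : kendall π σ ≠ 0 := fun hc => hπσ ((kendall_eq_zero_iff π σ).1 hc)
    have hnot : ¬ ((kendall π σ : ℝ) < h) := fun hc => hk (nat_cast_lt_of_le_one hh1 _ hc)
    rw [if_neg hnot, if_neg hπσ, mul_zero]

/-- Consistency of the kernel estimator: if each censoring set `F π` contains `π` and
is either contained in `R` or disjoint from `R`, the surrogate weights `q(·|S)` are
nonnegative, supported on `S`, and sum to one, and `X₁, X₂, …` are i.i.d. random
permutations with law `p`, then for any bandwidth `0 < h ≤ 1` the kernel estimator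
`p̂_m(R) = (1/m) Σ_{i<m} Σ_{π∈R} Σ_{σ∈F(Xᵢ)} q(σ|F(Xᵢ)) K_h(T(π,σ))`
converges almost surely to `p(R) = Σ_{π∈R} p(π)`. -/
theorem kernel_estimator_consistency (n : ℕ) (hn : 1 ≤ n)
    {Ω : Type*} [MeasurableSpace Ω] (μ : Measure Ω) [IsProbabilityMeasure μ]
    (p : Equiv.Perm (Fin n) → ℝ)
    (hp0 : ∀ σ, 0 ≤ p σ) (hp1 : ∑ σ : Equiv.Perm (Fin n), p σ = 1)
    (R : Finset (Equiv.Perm (Fin n)))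
    (F : Equiv.Perm (Fin n) → Finset (Equiv.Perm (Fin n)))
    (hFmem : ∀ π, π ∈ F π)
    (hFR : ∀ π, F π ⊆ R ∨ Disjoint (F π) R)
    (q : Finset (Equiv.Perm (Fin n)) → Equiv.Perm (Fin n) → ℝ)
    (hq0 : ∀ S σ, 0 ≤ q S σ)
    (hqsupp : ∀ (S : Finset (Equiv.Perm (Fin n))) σ, σ ∉ S → q S σ = 0)
    (hq1 : ∀ S : Finset (Equiv.Perm (Fin n)), S.Nonempty → ∑ σ ∈ S, q S σ = 1)
    (X : ℕ → Ω → Equiv.Perm (Fin n))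
    (hXmeas : ∀ i, @Measurable Ω (Equiv.Perm (Fin n)) _ ⊤ (X i))
    (hXindep : iIndepFun (m := fun _ : ℕ => (⊤ : MeasurableSpace (Equiv.Perm (Fin n)))) X μ)
    (hXlaw : ∀ i σ, μ {ω | X i ω = σ} = ENNReal.ofReal (p σ))
    (h : ℝ) (hh0 : 0 < h) (hh1 : h ≤ 1) :
    ∀ᵐ ω ∂μ, Tendsto
      (fun m : ℕ => (1 / (m : ℝ)) * ∑ i ∈ Finset.range m,
        ∑ π ∈ R, ∑ σ ∈ F (X i ω), q (F (X i ω)) σ * triK n h π σ)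
      atTop (nhds (∑ π ∈ R, p π)) := by
  classical
  letI : MeasurableSpace (Equiv.Perm (Fin n)) := ⊤
  -- triK is the indicator of equality
  have htriK : ∀ π σ : Equiv.Perm (Fin n), triK n h π σ = if π = σ then 1 else 0 :=
    triK_indicator hh0 hh1
  -- The inner double sum is the indicator of membership in R
  have hsum : ∀ x : Equiv.Perm (Fin n),
      (∑ π ∈ R, ∑ σ ∈ F x, q (F x) σ * triK n h π σ) = if x ∈ R then 1 else 0 := by
    intro x
    rw [Finset.sum_comm]
    have hterm : ∀ σ ∈ F x, ∑ π ∈ R, q (F x) σ * triK n h π σ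
        = q (F x) σ * (if σ ∈ R then 1 else 0) := by
      intro σ _
      rw [← Finset.mul_sum]
      congr 1
      calc ∑ π ∈ R, triK n h π σ = ∑ π ∈ R, if π = σ then 1 else 0 :=
            Finset.sum_congr rfl fun π _ => htriK π σ
        _ = if σ ∈ R then 1 else 0 := Finset.sum_ite_eq' R σ (fun _ => (1:ℝ))
    rw [Finset.sum_congr rfl hterm]
    rcases hFR x with hsub | hdis
    · have hx : x ∈ R := hsub (hFmem x)
      rw [if_pos hx]
      have : ∀ σ ∈ F x, q (F x) σ * (if σ ∈ R then 1 else 0) = q (F x) σ := by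
        intro σ hσ
        rw [if_pos (hsub hσ), mul_one]
      rw [Finset.sum_congr rfl this]
      exact hq1 (F x) ⟨x, hFmem x⟩
    · have hx : x ∉ R := fun hxR => (Finset.disjoint_left.1 hdis (hFmem x)) hxR
      rw [if_neg hx]
      refine Finset.sum_eq_zero fun σ hσ => ?_
      have : σ ∉ R := fun hσR => (Finset.disjoint_left.1 hdis hσ) hσR
      rw [if_neg this, mul_zero]
  -- The random variables
  set f : Equiv.Perm (Fin n) → ℝ := fun σ => if σ ∈ R then 1 else 0 with hf
  have hfmeas : Measurable[⊤] f := measurable_from_top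
  set Y : ℕ → Ω → ℝ := fun i ω => f (X i ω) with hY
  have hYmeas : ∀ i, Measurable (Y i) := fun i => hfmeas.comp (hXmeas i)
  -- identical distribution
  have hXident : ∀ i, @IdentDistrib Ω Ω (Equiv.Perm (Fin n)) _ _ ⊤ (X i) (X 0) μ μ := by
    intro i
    refine ⟨(hXmeas i).aemeasurable, (hXmeas 0).aemeasurable, ?_⟩
    refine MeasureTheory.Measure.ext_of_singleton fun σ => ?_
    rw [Measure.map_apply (hXmeas i) MeasurableSpace.measurableSet_top,
      Measure.map_apply (hXmeas 0) MeasurableSpace.measurableSet_top]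
    have h1 : X i ⁻¹' {σ} = {ω | X i ω = σ} := rfl
    have h2 : X 0 ⁻¹' {σ} = {ω | X 0 ω = σ} := rfl
    rw [h1, h2, hXlaw i σ, hXlaw 0 σ]
  have hident : ∀ i, IdentDistrib (Y i) (Y 0) μ μ := fun i => (hXident i).comp hfmeas
  -- pairwise independence
  have hindep : Pairwise (Function.onFun (IndepFun · · μ) Y) := fun i j hij =>
    (hXindep.indepFun hij).comp hfmeas hfmeas
  -- integrability
  have hsmeas : MeasurableSet (X 0 ⁻¹' (R : Set (Equiv.Perm (Fin n)))) :=
    hXmeas 0 MeasurableSpace.measurableSet_top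
  have hY0 : Y 0 = (X 0 ⁻¹' (R : Set (Equiv.Perm (Fin n)))).indicator (fun _ => (1:ℝ)) := by
    funext ω
    by_cases hω : X 0 ω ∈ R
    · simp [hY, hf, hω, Set.indicator_of_mem, Set.mem_preimage]
    · simp [hY, hf, hω, Set.indicator_of_notMem, Set.mem_preimage]
  have hint : Integrable (Y 0) μ := by
    rw [hY0]
    exact (integrable_const (1:ℝ)).indicator hsmeas
  -- expectation
  have hmeas_s : μ (X 0 ⁻¹' (R : Set (Equiv.Perm (Fin n))))
      = ∑ σ ∈ R, ENNReal.ofReal (p σ) := by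
    have hset : X 0 ⁻¹' (R : Set (Equiv.Perm (Fin n))) = ⋃ σ ∈ R, X 0 ⁻¹' {σ} := by
      ext ω; simp
    rw [hset, measure_biUnion_finset]
    · exact Finset.sum_congr rfl fun σ _ => hXlaw 0 σ
    · intro a _ b _ hab
      exact Set.disjoint_left.2 fun ω ha hb => hab (by
        have : X 0 ω = a := ha
        have hb' : X 0 ω = b := hb
        rw [← this, hb'])
    · intro σ _
      exact hXmeas 0 MeasurableSpace.measurableSet_top
  have hexp : ∫ ω, Y 0 ω ∂μ = ∑ π ∈ R, p π := by
    rw [hY0, MeasureTheory.integral_indicator_const (1:ℝ) hsmeas, measureReal_def, hmeas_s, smul_eq_mul,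
      mul_one, ENNReal.toReal_sum (fun σ _ => ENNReal.ofReal_ne_top)]
    exact Finset.sum_congr rfl fun σ _ => ENNReal.toReal_ofReal (hp0 σ)
  -- strong law of large numbers
  have hslln := ProbabilityTheory.strong_law_ae_real Y hint hindep hident
  filter_upwards [hslln] with ω hω
  have heq : (fun m : ℕ => (1 / (m : ℝ)) * ∑ i ∈ Finset.range m,
      ∑ π ∈ R, ∑ σ ∈ F (X i ω), q (F (X i ω)) σ * triK n h π σ)
      = fun m : ℕ => (∑ i ∈ Finset.range m, Y i ω) / m := by
    funext m
    rw [one_div, inv_mul_eq_div]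
    congr 1
    exact Finset.sum_congr rfl fun i _ => by rw [hsum (X i ω)]
  rw [heq, ← hexp]
  exact hω
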